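/- For θ > 0 small, define A_θ = B_d ∩ {z = (z_1, z') ∈ R × R^{d-1} : −θ|z'| ≤ z_1 − 1 ≤ 0}. Then ℓ_d(A_θ) = O(θ^{d+1}) as θ → 0; moreover A_θ is separated from the origin, so that the density u_d(x) = 1/(a_d|x|^{d-1}) of the spherical uniform is bounded above on A_θ uniformly for small θ, and hence U_d(A_θ) = O(θ^{d+1}). -/

import Mathlib

open Classical

open Metric MeasureTheory Real
open scoped ENNReal

set_option maxHeartbeats 1000000

private lemma abs_coord_le_norm' {d : ℕ} (v : EuclideanSpace ℝ (Fin d)) (j : Fin d) :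
    |v j| ≤ ‖v‖ := by
  rw [EuclideanSpace.norm_eq, ← Real.sqrt_sq_eq_abs]
  apply Real.sqrt_le_sqrt
  have := Finset.single_le_sum (f := fun i => ‖v i‖ ^ 2) (fun i _ => by positivity)
    (Finset.mem_univ j)
  simpa using this

private lemma pythag' {d : ℕ} (i0 : Fin d) (z : EuclideanSpace ℝ (Fin d)) :
    ‖z‖ ^ 2 = (z i0) ^ 2 + ‖z - z i0 • EuclideanSpace.single i0 (1:ℝ)‖ ^ 2 := by
  set e : EuclideanSpace ℝ (Fin d) := EuclideanSpace.single i0 (1:ℝ) with he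
  have hz : z = z i0 • e + (z - z i0 • e) := by abel
  have horth : inner ℝ (z i0 • e) (z - z i0 • e) = (0:ℝ) := by
    rw [real_inner_smul_left, he, EuclideanSpace.inner_single_left]
    simp [EuclideanSpace.single_apply]
  have hne : ‖z i0 • e‖ = |z i0| := by
    rw [norm_smul, he, EuclideanSpace.norm_single]; simp
  calc ‖z‖ ^ 2 = ‖z i0 • e + (z - z i0 • e)‖ ^ 2 := by rw [← hz]
    _ = ‖z i0 • e‖ ^ 2 + 2 * inner ℝ (z i0 • e) (z - z i0 • e) + ‖z - z i0 • e‖ ^ 2 := by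
        rw [@norm_add_sq_real]
    _ = (z i0) ^ 2 + ‖z - z i0 • e‖ ^ 2 := by rw [horth, hne, sq_abs]; ring

/-- For `A_θ = B_d ∩ {z : −θ|z'| ≤ z₁ − 1 ≤ 0}` (coordinates `z = (z₁, z')`),
`ℓ_d(A_θ) = O(θ^{d+1})` as `θ → 0`; moreover `A_θ` is separated from the origin, the
density `u_d(x) = 1/(a_d |x|^{d-1})` of the spherical uniform is uniformly bounded
above on `A_θ` for small `θ`, and hence `U_d(A_θ) = O(θ^{d+1})`. -/
theorem cap_near_pole_volume (d : ℕ) (hd : 2 ≤ d)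
    (e₁ : EuclideanSpace ℝ (Fin d)) (he₁ : e₁ = EuclideanSpace.single (⟨0, by omega⟩ : Fin d) 1)
    (a : ℝ) (ha : a = 2 * π ^ ((d : ℝ) / 2) / Gamma ((d : ℝ) / 2))
    (u : EuclideanSpace ℝ (Fin d) → ℝ≥0∞)
    (hu : ∀ x, u x = if x ∈ ball (0 : EuclideanSpace ℝ (Fin d)) 1 \ {0}
      then ENNReal.ofReal (1 / (a * ‖x‖ ^ (d - 1))) else 0)
    (A : ℝ → Set (EuclideanSpace ℝ (Fin d)))
    (hA : ∀ θ, A θ = {z | z ∈ ball (0 : EuclideanSpace ℝ (Fin d)) 1 ∧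
      -θ * ‖z - z (⟨0, by omega⟩ : Fin d) • e₁‖ ≤ z (⟨0, by omega⟩ : Fin d) - 1 ∧
      z (⟨0, by omega⟩ : Fin d) - 1 ≤ 0}) :
    ∃ C c Cu C' θ₀ : ℝ, 0 < C ∧ 0 < c ∧ 0 < Cu ∧ 0 < C' ∧ 0 < θ₀ ∧
      ∀ θ : ℝ, 0 < θ → θ < θ₀ →
        volume (A θ) ≤ ENNReal.ofReal (C * θ ^ (d + 1)) ∧
        (∀ z ∈ A θ, c ≤ ‖z‖) ∧
        (∀ z ∈ A θ, u z ≤ ENNReal.ofReal Cu) ∧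
        (volume.withDensity u) (A θ) ≤ ENNReal.ofReal (C' * θ ^ (d + 1)) := by
  have hd0 : (0:ℝ) < (d : ℝ) / 2 := by positivity
  have hΓ : 0 < Gamma ((d : ℝ) / 2) := Real.Gamma_pos_of_pos hd0
  have haa : 0 < a := by rw [ha]; positivity
  set i0 : Fin d := ⟨0, by omega⟩ with hi0
  set C : ℝ := 2 * 4 ^ (d - 1) with hC
  set Cu : ℝ := 2 ^ (d - 1) / a with hCu
  refine ⟨C, 1/2, Cu, Cu * C, 1/2, by positivity, by norm_num, by positivity, by positivity,
    by norm_num, ?_⟩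
  intro θ hθ hθ'
  -- key coordinate bounds
  have key : ∀ z ∈ A θ, (1 - 2 * θ ^ 2 ≤ z i0 ∧ z i0 ≤ 1) ∧
      ∀ j, j ≠ i0 → |z j| ≤ 2 * θ := by
    intro z hz
    rw [hA] at hz
    obtain ⟨hball, h2, h3⟩ := hz
    rw [mem_ball_zero_iff] at hball
    set t : ℝ := z i0 with ht
    set w : ℝ := ‖z - t • e₁‖ with hw
    have hw0 : 0 ≤ w := norm_nonneg _
    have hpy : ‖z‖ ^ 2 = t ^ 2 + w ^ 2 := by rw [hw, he₁]; exact pythag' i0 z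
    have hlt : t ^ 2 + w ^ 2 < 1 := by
      rw [← hpy]
      exact pow_lt_one₀ (norm_nonneg z) hball (by norm_num)
    have habs : |t| ≤ ‖z‖ := abs_coord_le_norm' z i0
    have htlt : |t| < 1 := lt_of_le_of_lt habs hball
    have h1t : 1 - t ≤ θ * w := by linarith
    have ht1 : t ≤ 1 := by linarith
    have hwlt : w ^ 2 < 2 * (θ * w) := by linarith [sq_nonneg (1 - t)]
    have hwpos : 0 < w := by
      rcases hw0.lt_or_eq with h | h
      · exact h
      · exfalso; rw [← h] at hwlt; simp at hwlt
    have hw2θ : w ≤ 2 * θ := by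
      have h' : w * w < (2 * θ) * w := by linarith [hwlt]
      exact le_of_lt (lt_of_mul_lt_mul_right h' hwpos.le)
    have htlow : 1 - 2 * θ ^ 2 ≤ t := by
      have h' : θ * w ≤ θ * (2 * θ) := mul_le_mul_of_nonneg_left hw2θ (le_of_lt hθ)
      have h'' : θ * (2 * θ) = 2 * θ ^ 2 := by ring
      linarith
    refine ⟨⟨htlow, ht1⟩, ?_⟩
    intro j hj
    have hzj : z j = (z - t • e₁) j := by
      have : (t • e₁) j = 0 := by
        rw [he₁]
        simp only [PiLp.smul_apply, smul_eq_mul]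
        rw [EuclideanSpace.single_apply]
        simp [hj]
      simp [this]
    calc |z j| = |(z - t • e₁) j| := by rw [hzj]
      _ ≤ w := abs_coord_le_norm' _ j
      _ ≤ 2 * θ := hw2θ
  have hθsq : 2 * θ ^ 2 ≤ 1 / 2 := by nlinarith
  -- norm lower bound
  have hnorm : ∀ z ∈ A θ, 1/2 ≤ ‖z‖ := by
    intro z hz
    have h := (key z hz).1.1
    have habs : |z i0| ≤ ‖z‖ := abs_coord_le_norm' z i0
    have : z i0 ≤ |z i0| := le_abs_self _
    linarith
  -- volume bound
  have hvol : volume (A θ) ≤ ENNReal.ofReal (C * θ ^ (d + 1)) := by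
    set s : Fin d → Set ℝ := fun j =>
      if j = i0 then Set.Icc (1 - 2 * θ ^ 2) 1 else Set.Icc (-(2 * θ)) (2 * θ) with hs
    have hsub : A θ ⊆ (MeasurableEquiv.toLp 2 (Fin d → ℝ)).symm ⁻¹' (Set.pi Set.univ s) := by
      intro z hz
      have hk := key z hz
      simp only [MeasurableEquiv.coe_toLp_symm, Set.mem_preimage, Set.mem_pi, Set.mem_univ,
        forall_true_left, MeasurableEquiv.coe_mk, Equiv.coe_fn_mk]
      intro j
      rw [hs]
      by_cases hj : j = i0
      · subst hj; simp only [if_pos rfl]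
        exact ⟨hk.1.1, hk.1.2⟩
      · simp only [if_neg hj]
        have := hk.2 j hj
        rw [abs_le] at this
        exact ⟨this.1, this.2⟩
    have hmeq : volume ((MeasurableEquiv.toLp 2 (Fin d → ℝ)).symm ⁻¹' (Set.pi Set.univ s))
        = ∏ i, volume (s i) := by
      rw [(EuclideanSpace.volume_preserving_symm_measurableEquiv_toLp (Fin d)).measure_preimage
        (MeasurableSet.univ_pi (fun i => by rw [hs]; dsimp only; split <;>
          exact measurableSet_Icc)).nullMeasurableSet]
      exact volume_pi_pi s
    have hprod : ∏ i, volume (s i)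
        = ENNReal.ofReal (2 * θ ^ 2) * ENNReal.ofReal (4 * θ) ^ (d - 1) := by
      have hf : ∀ i, volume (s i) = if i = i0 then ENNReal.ofReal (2 * θ ^ 2)
          else ENNReal.ofReal (4 * θ) := by
        intro i
        rw [hs]
        by_cases hi : i = i0
        · simp only [if_pos hi, Real.volume_Icc]
          congr 1; ring
        · simp only [if_neg hi, Real.volume_Icc]
          congr 1; ring
      simp_rw [hf]
      rw [← Finset.mul_prod_erase Finset.univ _ (Finset.mem_univ i0), if_pos rfl]
      congr 1
      rw [Finset.prod_congr rfl (fun j hj => if_neg (Finset.ne_of_mem_erase hj)),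
        Finset.prod_const, Finset.card_erase_of_mem (Finset.mem_univ i0), Finset.card_univ,
        Fintype.card_fin]
    calc volume (A θ) ≤ volume ((MeasurableEquiv.toLp 2 (Fin d → ℝ)).symm ⁻¹' (Set.pi Set.univ s)) :=
          measure_mono hsub
      _ = ENNReal.ofReal (2 * θ ^ 2) * ENNReal.ofReal (4 * θ) ^ (d - 1) := by rw [hmeq, hprod]
      _ = ENNReal.ofReal (2 * θ ^ 2 * (4 * θ) ^ (d - 1)) := by
          rw [← ENNReal.ofReal_pow (by positivity), ← ENNReal.ofReal_mul (by positivity)]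
      _ = ENNReal.ofReal (C * θ ^ (d + 1)) := by
          congr 1
          have hdd : 2 + (d - 1) = d + 1 := by omega
          calc 2 * θ ^ 2 * (4 * θ) ^ (d - 1) = 2 * 4 ^ (d - 1) * (θ ^ 2 * θ ^ (d - 1)) := by
                rw [mul_pow]; ring
            _ = C * θ ^ (d + 1) := by rw [← pow_add, hdd, hC]
  -- density bound
  have hub : ∀ z ∈ A θ, u z ≤ ENNReal.ofReal Cu := by
    intro z hz
    have hn := hnorm z hz
    have hzball : z ∈ ball (0 : EuclideanSpace ℝ (Fin d)) 1 := by
      rw [hA] at hz; exact hz.1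
    have hz0 : z ≠ 0 := by
      intro h; rw [h] at hn; simp at hn; linarith
    rw [hu, if_pos ⟨hzball, hz0⟩]
    apply ENNReal.ofReal_le_ofReal
    rw [hCu]
    have hpow : (1/2 : ℝ) ^ (d - 1) ≤ ‖z‖ ^ (d - 1) :=
      pow_le_pow_left₀ (by norm_num) hn _
    have hpos : (0:ℝ) < a * (1/2) ^ (d - 1) := by positivity
    calc 1 / (a * ‖z‖ ^ (d - 1)) ≤ 1 / (a * (1/2) ^ (d - 1)) := by
          apply one_div_le_one_div_of_le hpos
          exact mul_le_mul_of_nonneg_left hpow (le_of_lt haa)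
      _ = 2 ^ (d - 1) / a := by
          rw [div_pow]
          field_simp
          simp
  -- withDensity bound
  have hmeasA : MeasurableSet (A θ) := by
    rw [hA]
    have c1 : Continuous (fun z : EuclideanSpace ℝ (Fin d) => z i0) :=
      (EuclideanSpace.proj i0).continuous
    have c2 : Continuous (fun z : EuclideanSpace ℝ (Fin d) => ‖z - z i0 • e₁‖) :=
      (continuous_id.sub (c1.smul continuous_const)).norm
    have : {z : EuclideanSpace ℝ (Fin d) | z ∈ ball (0 : EuclideanSpace ℝ (Fin d)) 1 ∧
        -θ * ‖z - z i0 • e₁‖ ≤ z i0 - 1 ∧ z i0 - 1 ≤ 0}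
        = ball 0 1 ∩ ({z | -θ * ‖z - z i0 • e₁‖ ≤ z i0 - 1} ∩ {z | z i0 - 1 ≤ 0}) := by
      ext z; simp [Set.mem_inter_iff, and_assoc]
    rw [this]
    exact measurableSet_ball.inter
      ((measurableSet_le (by fun_prop) (by fun_prop)).inter
        (measurableSet_le (by fun_prop) measurable_const))
  have hwd : (volume.withDensity u) (A θ) ≤ ENNReal.ofReal ((Cu * C) * θ ^ (d + 1)) := by
    rw [withDensity_apply u hmeasA]
    calc ∫⁻ z in A θ, u z ≤ ∫⁻ _ in A θ, ENNReal.ofReal Cu :=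
          setLIntegral_mono measurable_const hub
      _ = ENNReal.ofReal Cu * volume (A θ) := setLIntegral_const _ _
      _ ≤ ENNReal.ofReal Cu * ENNReal.ofReal (C * θ ^ (d + 1)) := by
          exact mul_le_mul_right hvol _
      _ = ENNReal.ofReal ((Cu * C) * θ ^ (d + 1)) := by
          rw [← ENNReal.ofReal_mul (by positivity)]
          ring_nf
  exact ⟨hvol, hnorm, hub, hwd⟩
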